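/- arXiv:1612.07670 — 2 statements merged into one kernel-verified Lean document; each statement's English description precedes it below -/
import Mathlib

section
/- Let Z ~ N(μ_j, σ_j²) and Z' ~ N(μ_{j'}, σ_{j'}²) be independent of each other and of Z̄_l, the sample mean of n_l iid N(μ_l, σ_l²) variables. Then Cov((Z − Z̄_l)², (Z' − Z̄_l)²) = 2(σ_l²/n_l)(σ_l²/n_l + 2(μ_j − μ_l)(μ_{j'} − μ_l)). -/
open MeasureTheory ProbabilityTheory Real

open Filter Set


lemma abs_pow_le_exp (k : ℕ) {b : ℝ} (hb : 0 < b) (x : ℝ) :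
    |x| ^ k ≤ (b⁻¹ ^ k * k.factorial + 1) * exp (b * x ^ 2) := by
  have h1 : (b * x ^ 2) ^ k / k.factorial ≤ exp (b * x ^ 2) := by
    calc (b * x ^ 2) ^ k / k.factorial
        ≤ ∑ i ∈ Finset.range (k + 1), (b * x ^ 2) ^ i / i.factorial := by
          exact Finset.single_le_sum (f := fun i => (b * x ^ 2) ^ i / (i.factorial : ℝ))
            (fun i _ => by positivity) (Finset.self_mem_range_succ k)
      _ ≤ exp (b * x ^ 2) := Real.sum_le_exp_of_nonneg (by positivity) _
  have h2 : |x| ^ k ≤ (x ^ 2) ^ k + 1 := by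
    rcases le_total (|x|) 1 with h | h
    · have : |x| ^ k ≤ 1 := pow_le_one₀ (abs_nonneg x) h
      nlinarith [pow_nonneg (sq_nonneg x) k]
    · have : |x| ^ k ≤ (|x| ^ k) ^ 2 := le_self_pow₀ (one_le_pow₀ h) (by norm_num)
      calc |x| ^ k ≤ (|x| ^ k) ^ 2 := this
        _ = (x ^ 2) ^ k := by rw [← pow_mul, mul_comm k 2, pow_mul, sq_abs]
        _ ≤ (x ^ 2) ^ k + 1 := by linarith
  have h3 : (x ^ 2) ^ k ≤ b⁻¹ ^ k * k.factorial * exp (b * x ^ 2) := by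
    have := (div_le_iff₀ (by positivity : (0:ℝ) < (k.factorial : ℝ))).mp h1
    calc (x ^ 2) ^ k = b⁻¹ ^ k * (b * x ^ 2) ^ k := by
          rw [mul_pow, ← mul_assoc, ← mul_pow, inv_mul_cancel₀ hb.ne', one_pow, one_mul]
      _ ≤ b⁻¹ ^ k * (exp (b * x ^ 2) * k.factorial) := by
          apply mul_le_mul_of_nonneg_left this (by positivity)
      _ = b⁻¹ ^ k * k.factorial * exp (b * x ^ 2) := by ring
  have h4 : (1:ℝ) ≤ exp (b * x ^ 2) := by
    rw [← Real.exp_zero]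
    exact Real.exp_le_exp.mpr (by positivity)
  calc |x| ^ k ≤ (x ^ 2) ^ k + 1 := h2
    _ ≤ b⁻¹ ^ k * k.factorial * exp (b * x ^ 2) + 1 * exp (b * x ^ 2) := by
        refine add_le_add h3 (by linarith)
    _ = (b⁻¹ ^ k * k.factorial + 1) * exp (b * x ^ 2) := by ring

lemma integrable_pow_mul_exp (k : ℕ) {b : ℝ} (hb : 0 < b) :
    Integrable (fun x : ℝ => x ^ k * exp (-b * x ^ 2)) := by
  have hb2 : 0 < b / 2 := half_pos hb
  set C : ℝ := ((b/2)⁻¹ ^ k * k.factorial + 1) with hC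
  refine Integrable.mono ((integrable_exp_neg_mul_sq hb2).const_mul C) ?_ ?_
  · exact ((continuous_pow k).mul (by continuity)).aestronglyMeasurable
  · refine ae_of_all _ fun x => ?_
    have hC0 : 0 ≤ C := by positivity
    rw [norm_mul, norm_pow, norm_eq_abs, norm_eq_abs, abs_exp]
    rw [norm_eq_abs, abs_mul, abs_of_nonneg hC0, abs_exp]
    calc |x| ^ k * exp (-b * x ^ 2)
        ≤ (C * exp (b / 2 * x ^ 2)) * exp (-b * x ^ 2) := by
          exact mul_le_mul_of_nonneg_right (abs_pow_le_exp k hb2 x) (exp_nonneg _)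
      _ = C * exp (-(b / 2) * x ^ 2) := by
          rw [mul_assoc, ← Real.exp_add]; ring_nf

lemma tendsto_pow_mul_exp_atTop (k : ℕ) {b : ℝ} (hb : 0 < b) :
    Tendsto (fun x : ℝ => x ^ k * exp (-b * x ^ 2)) atTop (nhds 0) := by
  have h1 : Tendsto (fun x : ℝ => x ^ k * exp (-x)) atTop (nhds 0) :=
    tendsto_pow_mul_exp_neg_atTop_nhds_zero k
  refine tendsto_of_tendsto_of_tendsto_of_le_of_le' tendsto_const_nhds h1 ?_ ?_
  · filter_upwards [eventually_ge_atTop (0:ℝ)] with x hx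
    positivity
  · filter_upwards [eventually_ge_atTop (max 1 b⁻¹)] with x hx
    have hx1 : (1:ℝ) ≤ x := le_trans (le_max_left _ _) hx
    have hxb : b⁻¹ ≤ x := le_trans (le_max_right _ _) hx
    have : x ≤ b * x ^ 2 := by
      have : b⁻¹ * b ≤ x * b := mul_le_mul_of_nonneg_right hxb hb.le
      rw [inv_mul_cancel₀ hb.ne'] at this
      nlinarith
    have h5 := Real.exp_le_exp.mpr (neg_le_neg this)
    rw [neg_mul]
    exact mul_le_mul_of_nonneg_left h5 (by positivity)

lemma tendsto_pow_mul_exp_atBot (k : ℕ) {b : ℝ} (hb : 0 < b) :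
    Tendsto (fun x : ℝ => x ^ k * exp (-b * x ^ 2)) atBot (nhds 0) := by
  have h1 := (tendsto_pow_mul_exp_atTop k hb).comp tendsto_neg_atBot_atTop
  have h2 := h1.const_mul ((-1:ℝ) ^ k)
  rw [mul_zero] at h2
  refine h2.congr fun x => ?_
  simp only [Function.comp_apply]
  have hxx : ((-1:ℝ)) ^ k * (-x) ^ k = x ^ k := by
    rw [← mul_pow]; ring_nf
  rw [neg_sq, ← mul_assoc, hxx]

lemma integral_eq_zero_of_deriv (f g : ℝ → ℝ) (hd : ∀ x, HasDerivAt f (g x) x)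
    (hi : Integrable g) (ht : Tendsto f atTop (nhds 0)) (hb : Tendsto f atBot (nhds 0)) :
    ∫ x, g x = 0 := by
  have h1 : ∫ x in Iic (0:ℝ), g x = f 0 - 0 :=
    integral_Iic_of_hasDerivAt_of_tendsto' (fun x _ => hd x) hi.integrableOn hb
  have h2 : ∫ x in Ioi (0:ℝ), g x = 0 - f 0 :=
    integral_Ioi_of_hasDerivAt_of_tendsto' (fun x _ => hd x) hi.integrableOn ht
  have h3 := intervalIntegral.integral_Iic_add_Ioi (μ := volume) (b := (0:ℝ))
    hi.integrableOn hi.integrableOn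
  rw [h1, h2] at h3
  linarith

lemma hasDerivAt_pow_mul_exp (k : ℕ) (x : ℝ) :
    HasDerivAt (fun x : ℝ => -(x ^ (k+1)) * exp (-(1/2) * x ^ 2))
      (x ^ (k + 2) * exp (-(1/2) * x ^ 2)
        - (k + 1) * x ^ k * exp (-(1/2) * x ^ 2)) x := by
  have he : HasDerivAt (fun x : ℝ => exp (-(1/2) * x ^ 2)) (-x * exp (-(1/2) * x ^ 2)) x := by
    have h1 : HasDerivAt (fun x : ℝ => -(1/2) * x ^ 2) (-x) x := by
      have := (hasDerivAt_pow 2 x).const_mul (-(1/2) : ℝ)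
      refine this.congr_deriv ?_
      push_cast; ring
    have := h1.exp
    convert this using 1
    ring
  have hp : HasDerivAt (fun x : ℝ => -(x ^ (k+1))) (-((k+1) * x ^ k)) x := by
    have := (hasDerivAt_pow (k+1) x).neg
    refine this.congr_deriv ?_
    push_cast; ring
  have := hp.mul he
  refine this.congr_deriv ?_
  push_cast
  ring

lemma half_pos' : (0:ℝ) < 1/2 := by norm_num

lemma J_zero : (∫ x : ℝ, x ^ 0 * exp (-(1/2) * x ^ 2)) = Real.sqrt (2 * π) := by
  simp only [pow_zero, one_mul]
  rw [integral_gaussian]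
  rw [show π / (1/2) = 2 * π by ring]

lemma J_odd (k : ℕ) : (∫ x : ℝ, x ^ (2*k+1) * exp (-(1/2) * x ^ 2)) = 0 := by
  have h := integral_neg_eq_self (fun x : ℝ => x ^ (2*k+1) * exp (-(1/2) * x ^ 2)) volume
  have h2 : (∫ x : ℝ, (-x) ^ (2*k+1) * exp (-(1/2) * (-x) ^ 2))
      = - ∫ x : ℝ, x ^ (2*k+1) * exp (-(1/2) * x ^ 2) := by
    rw [← integral_neg]
    congr 1
    funext x
    rw [neg_sq, Odd.neg_pow ⟨k, by ring⟩]
    ring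
  rw [h2] at h
  linarith

lemma J_rec (k : ℕ) : (∫ x : ℝ, x ^ (k+2) * exp (-(1/2) * x ^ 2))
    = (k + 1) * ∫ x : ℝ, x ^ k * exp (-(1/2) * x ^ 2) := by
  have hik := integrable_pow_mul_exp k half_pos'
  have hik2 := integrable_pow_mul_exp (k+2) half_pos'
  have hg : Integrable (fun x : ℝ => x ^ (k + 2) * exp (-(1/2) * x ^ 2)
      - (k + 1) * x ^ k * exp (-(1/2) * x ^ 2)) := by
    refine hik2.sub ?_
    have := hik.const_mul ((k:ℝ) + 1)
    refine this.congr ?_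
    exact ae_of_all _ fun x => by ring
  have ht : Tendsto (fun x : ℝ => -(x ^ (k+1)) * exp (-(1/2) * x ^ 2)) atTop (nhds 0) := by
    have := (tendsto_pow_mul_exp_atTop (k+1) half_pos').neg
    rw [neg_zero] at this
    exact this.congr fun x => by ring
  have hb : Tendsto (fun x : ℝ => -(x ^ (k+1)) * exp (-(1/2) * x ^ 2)) atBot (nhds 0) := by
    have := (tendsto_pow_mul_exp_atBot (k+1) half_pos').neg
    rw [neg_zero] at this
    exact this.congr fun x => by ring
  have h := integral_eq_zero_of_deriv _ _ (hasDerivAt_pow_mul_exp k) hg ht hb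
  rw [integral_sub hik2 (by
    have := hik.const_mul ((k:ℝ) + 1)
    refine this.congr (ae_of_all _ fun x => by ring))] at h
  have h2 : (∫ x : ℝ, ((k:ℝ) + 1) * x ^ k * exp (-(1/2) * x ^ 2))
      = ((k:ℝ)+1) * ∫ x : ℝ, x ^ k * exp (-(1/2) * x ^ 2) := by
    rw [← MeasureTheory.integral_const_mul]
    congr 1
    funext x
    ring
  rw [h2] at h
  linarith

lemma gaussianReal_integral_eq {μ : ℝ} {v : NNReal} (hv : v ≠ 0) (f : ℝ → ℝ) :
    ∫ x, f x ∂(gaussianReal μ v) = ∫ x, gaussianPDFReal μ v x * f x := by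
  rw [gaussianReal_of_var_ne_zero _ hv]
  have hmeas : Measurable fun x => (gaussianPDFReal μ v x).toNNReal :=
    (measurable_gaussianPDFReal μ v).real_toNNReal
  have hpdf : gaussianPDF μ v = fun x => (((gaussianPDFReal μ v x).toNNReal : NNReal) : ENNReal) := by
    funext x
    rw [gaussianPDF_def]
    rfl
  rw [hpdf, integral_withDensity_eq_integral_smul hmeas]
  congr 1
  funext x
  rw [NNReal.smul_def, smul_eq_mul, Real.coe_toNNReal _ (gaussianPDFReal_nonneg μ v x)]

lemma gaussianReal_integrable_iff {μ : ℝ} {v : NNReal} (hv : v ≠ 0) (f : ℝ → ℝ) :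
    Integrable f (gaussianReal μ v) ↔
      Integrable (fun x => gaussianPDFReal μ v x * f x) volume := by
  rw [gaussianReal_of_var_ne_zero _ hv]
  have hmeas : Measurable fun x => (gaussianPDFReal μ v x).toNNReal :=
    (measurable_gaussianPDFReal μ v).real_toNNReal
  have hpdf : gaussianPDF μ v = fun x => (((gaussianPDFReal μ v x).toNNReal : NNReal) : ENNReal) := by
    funext x
    rw [gaussianPDF_def]
    rfl
  rw [hpdf]
  have h := integrable_withDensity_iff_integrable_smul (μ := volume) hmeas (g := f)
  refine h.trans (integrable_congr (ae_of_all _ fun x => ?_))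
  show (gaussianPDFReal μ v x).toNNReal • f x = gaussianPDFReal μ v x * f x
  rw [NNReal.smul_def, smul_eq_mul, Real.coe_toNNReal _ (gaussianPDFReal_nonneg μ v x)]

lemma gaussianPDFReal_std (x : ℝ) :
    gaussianPDFReal 0 1 x = (Real.sqrt (2 * π))⁻¹ * exp (-(1/2) * x ^ 2) := by
  rw [gaussianPDFReal]
  push_cast
  norm_num
  left
  ring_nf

lemma integrable_pow_stdGaussian (k : ℕ) :
    Integrable (fun x : ℝ => x ^ k) (gaussianReal 0 1) := by
  rw [gaussianReal_integrable_iff one_ne_zero]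
  have h : (fun x : ℝ => gaussianPDFReal 0 1 x * x ^ k)
      = fun x => (Real.sqrt (2 * π))⁻¹ * (x ^ k * exp (-(1/2) * x ^ 2)) := by
    funext x
    rw [gaussianPDFReal_std]
    ring
  rw [h]
  exact (integrable_pow_mul_exp k half_pos').const_mul _

lemma integral_pow_stdGaussian (k : ℕ) :
    ∫ x, x ^ k ∂(gaussianReal 0 1)
      = (Real.sqrt (2 * π))⁻¹ * ∫ x : ℝ, x ^ k * exp (-(1/2) * x ^ 2) := by
  rw [gaussianReal_integral_eq one_ne_zero]
  rw [← MeasureTheory.integral_const_mul]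
  congr 1
  funext x
  rw [gaussianPDFReal_std]
  ring

lemma sqrt_two_pi_ne_zero : Real.sqrt (2 * π) ≠ 0 := by
  positivity

lemma std_m0 : ∫ x, x ^ 0 ∂(gaussianReal 0 1) = 1 := by
  rw [integral_pow_stdGaussian, J_zero, inv_mul_cancel₀ sqrt_two_pi_ne_zero]

lemma std_m1 : ∫ x, x ^ 1 ∂(gaussianReal 0 1) = 0 := by
  rw [integral_pow_stdGaussian, show (∫ x : ℝ, x ^ 1 * exp (-(1/2) * x ^ 2)) = 0 from J_odd 0, mul_zero]

lemma std_m2 : ∫ x, x ^ 2 ∂(gaussianReal 0 1) = 1 := by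
  rw [integral_pow_stdGaussian, show (2:ℕ) = 0+2 by norm_num, J_rec, J_zero]
  push_cast
  rw [zero_add, one_mul, inv_mul_cancel₀ sqrt_two_pi_ne_zero]

lemma std_m3 : ∫ x, x ^ 3 ∂(gaussianReal 0 1) = 0 := by
  rw [integral_pow_stdGaussian, show (3:ℕ) = 2*1+1 by norm_num, J_odd, mul_zero]

lemma std_m4 : ∫ x, x ^ 4 ∂(gaussianReal 0 1) = 3 := by
  rw [integral_pow_stdGaussian, show (4:ℕ) = 2+2 by norm_num, J_rec,
    show (∫ x : ℝ, x ^ 2 * exp (-(1/2) * x ^ 2)) = (((0:ℕ):ℝ) + 1) * ∫ x : ℝ, x ^ 0 * exp (-(1/2) * x ^ 2) from J_rec 0, J_zero]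
  push_cast
  rw [zero_add, one_mul]
  field_simp
  ring

lemma gaussianReal_eq_map (μ : ℝ) (v : NNReal) :
    gaussianReal μ v
      = Measure.map (fun x => Real.sqrt v * x + μ) (gaussianReal 0 1) := by
  have h1 : Measure.map (fun x : ℝ => Real.sqrt v * x) (gaussianReal 0 1)
      = gaussianReal 0 v := by
    rw [gaussianReal_map_const_mul]
    congr 1
    · ring
    · rw [mul_one]
      ext
      push_cast
      rw [Real.sq_sqrt v.coe_nonneg]
  have h2 : Measure.map (fun x : ℝ => x + μ) (gaussianReal 0 v) = gaussianReal μ v := by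
    rw [gaussianReal_map_add_const, zero_add]
  rw [← h2, ← h1, Measure.map_map (by fun_prop) (by fun_prop)]
  rfl

lemma integrable_pow_affine (s c : ℝ) (k : ℕ) :
    Integrable (fun x : ℝ => (s * x + c) ^ k) (gaussianReal 0 1) := by
  have h : (fun x : ℝ => (s * x + c) ^ k)
      = fun x => ∑ j ∈ Finset.range (k + 1), (s ^ j * c ^ (k - j) * (k.choose j)) * x ^ j := by
    funext x
    rw [add_pow]
    congr 1
    funext j
    rw [mul_pow]
    ring
  rw [h]
  exact integrable_finset_sum _ fun j _ => (integrable_pow_stdGaussian j).const_mul _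

lemma integrable_pow_gaussianReal (μ : ℝ) (v : NNReal) (k : ℕ) :
    Integrable (fun x : ℝ => x ^ k) (gaussianReal μ v) := by
  rw [gaussianReal_eq_map μ v]
  rw [integrable_map_measure (by fun_prop) (by fun_prop)]
  exact integrable_pow_affine _ _ k

lemma integral_pow_gaussianReal (μ : ℝ) (v : NNReal) (k : ℕ) :
    ∫ x, x ^ k ∂(gaussianReal μ v)
      = ∫ x, (Real.sqrt v * x + μ) ^ k ∂(gaussianReal 0 1) := by
  rw [gaussianReal_eq_map μ v, integral_map (by fun_prop) (by fun_prop)]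

lemma integral_poly_std (a0 a1 a2 a3 a4 : ℝ) :
    ∫ x, (a4 * x ^ 4 + a3 * x ^ 3 + a2 * x ^ 2 + a1 * x ^ 1 + a0 * x ^ 0)
        ∂(gaussianReal 0 1)
      = 3 * a4 + a2 + a0 := by
  have i4 := (integrable_pow_stdGaussian 4).const_mul a4
  have i3 := (integrable_pow_stdGaussian 3).const_mul a3
  have i2 := (integrable_pow_stdGaussian 2).const_mul a2
  have i1 := (integrable_pow_stdGaussian 1).const_mul a1
  have i0 := (integrable_pow_stdGaussian 0).const_mul a0
  have h43 : Integrable (fun x : ℝ => a4 * x ^ 4 + a3 * x ^ 3) (gaussianReal 0 1) := i4.add i3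
  have h432 : Integrable (fun x : ℝ => a4 * x ^ 4 + a3 * x ^ 3 + a2 * x ^ 2)
      (gaussianReal 0 1) := h43.add i2
  have h4321 : Integrable (fun x : ℝ => a4 * x ^ 4 + a3 * x ^ 3 + a2 * x ^ 2 + a1 * x ^ 1)
      (gaussianReal 0 1) := h432.add i1
  rw [integral_add h4321 i0, integral_add h432 i1,
    integral_add h43 i2, integral_add i4 i3,
    MeasureTheory.integral_const_mul, MeasureTheory.integral_const_mul,
    MeasureTheory.integral_const_mul, MeasureTheory.integral_const_mul,
    MeasureTheory.integral_const_mul, std_m0, std_m1, std_m2, std_m3, std_m4]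
  ring

lemma gaussian_m1 (μ : ℝ) (v : NNReal) : ∫ x, x ^ 1 ∂(gaussianReal μ v) = μ := by
  rw [integral_pow_gaussianReal]
  have h : (fun x : ℝ => (Real.sqrt v * x + μ) ^ 1)
      = fun x : ℝ => (0:ℝ) * x ^ 4 + 0 * x ^ 3 + 0 * x ^ 2 + Real.sqrt v * x ^ 1 + μ * x ^ 0 := by
    funext x; ring
  rw [h, integral_poly_std]
  ring

lemma gaussian_m2 (μ : ℝ) (v : NNReal) :
    ∫ x, x ^ 2 ∂(gaussianReal μ v) = v + μ ^ 2 := by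
  rw [integral_pow_gaussianReal]
  have h : (fun x : ℝ => (Real.sqrt v * x + μ) ^ 2)
      = fun x : ℝ => (0:ℝ) * x ^ 4 + 0 * x ^ 3 + Real.sqrt v ^ 2 * x ^ 2
          + (2 * Real.sqrt v * μ) * x ^ 1 + μ ^ 2 * x ^ 0 := by
    funext x; ring
  rw [h, integral_poly_std, Real.sq_sqrt v.coe_nonneg]
  ring

lemma gaussian_m3 (μ : ℝ) (v : NNReal) :
    ∫ x, x ^ 3 ∂(gaussianReal μ v) = μ ^ 3 + 3 * μ * v := by
  rw [integral_pow_gaussianReal]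
  have h : (fun x : ℝ => (Real.sqrt v * x + μ) ^ 3)
      = fun x : ℝ => (0:ℝ) * x ^ 4 + Real.sqrt v ^ 3 * x ^ 3
          + (3 * Real.sqrt v ^ 2 * μ) * x ^ 2
          + (3 * Real.sqrt v * μ ^ 2) * x ^ 1 + μ ^ 3 * x ^ 0 := by
    funext x; ring
  rw [h, integral_poly_std, Real.sq_sqrt v.coe_nonneg]
  ring

lemma gaussian_m4 (μ : ℝ) (v : NNReal) :
    ∫ x, x ^ 4 ∂(gaussianReal μ v) = μ ^ 4 + 6 * μ ^ 2 * v + 3 * v ^ 2 := by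
  rw [integral_pow_gaussianReal]
  have h : (fun x : ℝ => (Real.sqrt v * x + μ) ^ 4)
      = fun x : ℝ => (Real.sqrt v ^ 2) ^ 2 * x ^ 4 + (4 * Real.sqrt v ^ 3 * μ) * x ^ 3
          + (6 * Real.sqrt v ^ 2 * μ ^ 2) * x ^ 2
          + (4 * Real.sqrt v * μ ^ 3) * x ^ 1 + μ ^ 4 * x ^ 0 := by
    funext x; ring
  rw [h, integral_poly_std, Real.sq_sqrt v.coe_nonneg]
  ring

section RV
variable {Ω : Type*} [MeasurableSpace Ω] {P : Measure Ω}

lemma rv_integrable_pow {X : Ω → ℝ} {μ : ℝ} {v : NNReal} (hXm : Measurable X)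
    (hX : Measure.map X P = gaussianReal μ v) (k : ℕ) :
    Integrable (fun ω => X ω ^ k) P := by
  have h : Integrable (fun x : ℝ => x ^ k) (Measure.map X P) := by
    rw [hX]; exact integrable_pow_gaussianReal μ v k
  exact (integrable_map_measure (measurable_id.pow_const k).aestronglyMeasurable
    hXm.aemeasurable).mp h

lemma rv_moment {X : Ω → ℝ} {μ : ℝ} {v : NNReal} (hXm : Measurable X)
    (hX : Measure.map X P = gaussianReal μ v) (k : ℕ) :
    ∫ ω, X ω ^ k ∂P = ∫ x, x ^ k ∂(gaussianReal μ v) := by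
  have hg : AEStronglyMeasurable (fun x : ℝ => x ^ k) (Measure.map X P) :=
    (measurable_id.pow_const k).aestronglyMeasurable
  rw [← hX, integral_map hXm.aemeasurable hg]

lemma iIndepFun_ae_congr {ι : Type*} {β : Type*} {mβ : MeasurableSpace β}
    {f g : ι → Ω → β} (h : iIndepFun f P) (hfg : ∀ i, f i =ᵐ[P] g i) :
    iIndepFun g P := by
  rw [iIndepFun_iff_measure_inter_preimage_eq_mul] at h ⊢
  intro S sets hsets
  have hae : ∀ᵐ ω ∂P, ∀ i ∈ S, f i ω = g i ω := by
    simp only [← Finset.mem_coe]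
    rw [MeasureTheory.ae_ball_iff S.countable_toSet]
    intro i _
    exact hfg i
  have h1 : P (⋂ i ∈ S, g i ⁻¹' sets i) = P (⋂ i ∈ S, f i ⁻¹' sets i) := by
    apply measure_congr
    filter_upwards [hae] with ω hω
    rw [eq_iff_iff]
    show ω ∈ (⋂ i ∈ S, g i ⁻¹' sets i) ↔ ω ∈ ⋂ i ∈ S, f i ⁻¹' sets i
    simp only [Set.mem_iInter, Set.mem_preimage]
    constructor <;> intro hmem i hi
    · rw [hω i hi]; exact hmem i hi
    · rw [← hω i hi]; exact hmem i hi
  rw [h1, h S hsets]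
  refine Finset.prod_congr rfl fun i hi => ?_
  apply measure_congr
  filter_upwards [hfg i] with ω hω
  rw [eq_iff_iff]
  show f i ω ∈ sets i ↔ g i ω ∈ sets i
  rw [hω]

lemma integral_add_pow_indep [IsProbabilityMeasure P] {X Y : Ω → ℝ}
    (hXm : Measurable X) (hYm : Measurable Y) (h : IndepFun X Y P)
    (hX : ∀ j, j ≤ 4 → Integrable (fun ω => X ω ^ j) P)
    (hY : ∀ j, j ≤ 4 → Integrable (fun ω => Y ω ^ j) P) (k : ℕ) (hk : k ≤ 4) :
    Integrable (fun ω => (X ω + Y ω) ^ k) P ∧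
    ∫ ω, (X ω + Y ω) ^ k ∂P = ∑ j ∈ Finset.range (k+1),
      (k.choose j : ℝ) * ((∫ ω, X ω ^ j ∂P) * ∫ ω, Y ω ^ (k-j) ∂P) := by
  have hindep : ∀ i j : ℕ, IndepFun (fun ω => X ω ^ i) (fun ω => Y ω ^ j) P :=
    fun i j => h.comp (measurable_id.pow_const i) (measurable_id.pow_const j)
  have hint : ∀ j, j ∈ Finset.range (k+1) →
      Integrable (fun ω => X ω ^ j * Y ω ^ (k-j) * (k.choose j : ℝ)) P := by
    intro j hj
    rw [Finset.mem_range] at hj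
    have h1 : Integrable (fun ω => X ω ^ j * Y ω ^ (k-j)) P :=
      (hindep j (k-j)).integrable_mul (hX j (by omega)) (hY (k-j) (by omega))
    exact h1.mul_const _
  have he : (fun ω => (X ω + Y ω) ^ k)
      = fun ω => ∑ j ∈ Finset.range (k+1), X ω ^ j * Y ω ^ (k-j) * (k.choose j : ℝ) := by
    funext ω
    rw [add_pow]
  constructor
  · rw [he]
    exact integrable_finset_sum _ hint
  · rw [he, integral_finset_sum _ hint]
    refine Finset.sum_congr rfl fun j hj => ?_
    rw [Finset.mem_range] at hj
    have hprod : ∫ ω, X ω ^ j * Y ω ^ (k-j) ∂P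
        = (∫ ω, X ω ^ j ∂P) * ∫ ω, Y ω ^ (k-j) ∂P :=
      (hindep j (k-j)).integral_fun_mul_eq_mul_integral (hX j (by omega)).aestronglyMeasurable (hY (k-j) (by omega)).aestronglyMeasurable
    rw [MeasureTheory.integral_mul_const, hprod]
    ring

end RV

section SumMoments
variable {Ω : Type*} [MeasurableSpace Ω] {P : Measure Ω} [IsProbabilityMeasure P]

lemma sum_gaussian_moments {ι : Type*} [DecidableEq ι]
    {f : ι → Ω → ℝ} (hmeas : ∀ i, Measurable (f i))
    (hindep : iIndepFun f P)
    (μ0 : ℝ) (v0 : NNReal) :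
    ∀ s : Finset ι, (∀ j ∈ s, Measure.map (f j) P = gaussianReal μ0 v0) →
    (∀ k, k ≤ 4 → Integrable (fun ω => (∑ j ∈ s, f j ω) ^ k) P) ∧
    (∫ ω, (∑ j ∈ s, f j ω) ^ 1 ∂P = s.card * μ0) ∧
    (∫ ω, (∑ j ∈ s, f j ω) ^ 2 ∂P = s.card * v0 + (s.card * μ0) ^ 2) ∧
    (∫ ω, (∑ j ∈ s, f j ω) ^ 3 ∂P
      = (s.card * μ0) ^ 3 + 3 * (s.card * μ0) * (s.card * v0)) ∧
    (∫ ω, (∑ j ∈ s, f j ω) ^ 4 ∂P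
      = (s.card * μ0) ^ 4 + 6 * (s.card * μ0) ^ 2 * (s.card * v0)
        + 3 * (s.card * v0) ^ 2) := by
  intro s
  induction s using Finset.induction_on with
  | empty =>
    intro _
    refine ⟨fun k _ => ?_, ?_, ?_, ?_, ?_⟩ <;> simp
  | @insert a s ha ih =>
    intro hs
    have hs' : ∀ j ∈ s, Measure.map (f j) P = gaussianReal μ0 v0 :=
      fun j hj => hs j (Finset.mem_insert_of_mem hj)
    have ha' : Measure.map (f a) P = gaussianReal μ0 v0 := hs a (Finset.mem_insert_self a s)
    obtain ⟨iT, m1, m2, m3, m4⟩ := ih hs'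
    have m0 : ∫ ω, (∑ j ∈ s, f j ω) ^ 0 ∂P = 1 := by simp
    have iX : ∀ k, k ≤ 4 → Integrable (fun ω => f a ω ^ k) P :=
      fun k _ => rv_integrable_pow (hmeas a) ha' k
    have mX0 : ∫ ω, f a ω ^ 0 ∂P = 1 := by simp
    have mX1 : ∫ ω, f a ω ^ 1 ∂P = μ0 :=
      (rv_moment (hmeas a) ha' 1).trans (gaussian_m1 μ0 v0)
    have mX2 : ∫ ω, f a ω ^ 2 ∂P = v0 + μ0 ^ 2 :=
      (rv_moment (hmeas a) ha' 2).trans (gaussian_m2 μ0 v0)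
    have mX3 : ∫ ω, f a ω ^ 3 ∂P = μ0 ^ 3 + 3 * μ0 * v0 :=
      (rv_moment (hmeas a) ha' 3).trans (gaussian_m3 μ0 v0)
    have mX4 : ∫ ω, f a ω ^ 4 ∂P = μ0 ^ 4 + 6 * μ0 ^ 2 * v0 + 3 * v0 ^ 2 :=
      (rv_moment (hmeas a) ha' 4).trans (gaussian_m4 μ0 v0)
    have hTm : Measurable fun ω => ∑ j ∈ s, f j ω :=
      Finset.measurable_sum s fun j _ => hmeas j
    have hfs : (fun ω => ∑ j ∈ s, f j ω) = ∑ j ∈ s, f j := by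
      funext ω
      rw [Finset.sum_apply]
    have hXT : IndepFun (f a) (fun ω => ∑ j ∈ s, f j ω) P := by
      rw [hfs]
      exact (hindep.indepFun_finset_sum_of_notMem hmeas ha).symm
    have key := fun k hk =>
      integral_add_pow_indep (hmeas a) hTm hXT iX iT k hk
    have m1' : ∫ ω, (∑ j ∈ s, f j ω) ∂P = s.card * μ0 := by simpa using m1
    have mX1' : ∫ ω, f a ω ∂P = μ0 := by simpa using mX1
    have hch : ((Nat.choose 4 2 : ℕ) : ℝ) = 6 := by norm_num [Nat.choose]
    have hcard : ((insert a s).card : ℝ) = (s.card : ℝ) + 1 := by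
      rw [Finset.card_insert_of_notMem ha]
      push_cast
      ring
    refine ⟨fun k hk => ?_, ?_, ?_, ?_, ?_⟩
    · simp only [Finset.sum_insert ha]
      exact (key k hk).1
    · simp only [Finset.sum_insert ha]
      rw [(key 1 (by norm_num)).2, hcard]
      norm_num [Finset.sum_range_succ, m0, m1, mX0, mX1, m1', mX1', hch]
      ring
    · simp only [Finset.sum_insert ha]
      rw [(key 2 (by norm_num)).2, hcard]
      norm_num [Finset.sum_range_succ, m0, m1, m2, mX0, mX1, mX2, m1', mX1', hch]
      ring
    · simp only [Finset.sum_insert ha]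
      rw [(key 3 (by norm_num)).2, hcard]
      norm_num [Finset.sum_range_succ, m0, m1, m2, m3, mX0, mX1, mX2, mX3, m1', mX1', hch]
      ring
    · simp only [Finset.sum_insert ha]
      rw [(key 4 (by norm_num)).2, hcard]
      norm_num [Finset.sum_range_succ, m0, m1, m2, m3, m4, mX0, mX1, mX2, mX3, mX4, m1', mX1', hch]
      ring

end SumMoments

lemma integral_comb3 {Ω : Type*} [MeasurableSpace Ω] {P : Measure Ω} {f1 f2 f3 : Ω → ℝ} (c1 c2 c3 : ℝ)
    (h1 : Integrable f1 P)
    (h2 : Integrable f2 P)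
    (h3 : Integrable f3 P) :
    Integrable (fun ω => c1 * f1 ω + c2 * f2 ω + c3 * f3 ω) P ∧
    ∫ ω, c1 * f1 ω + c2 * f2 ω + c3 * f3 ω ∂P = c1 * ∫ ω, f1 ω ∂P + c2 * ∫ ω, f2 ω ∂P + c3 * ∫ ω, f3 ω ∂P := by
  have j1 : Integrable (fun ω => c1 * f1 ω) P := h1.const_mul c1
  have j2 : Integrable (fun ω => c1 * f1 ω + c2 * f2 ω) P := j1.add (h2.const_mul c2)
  have j3 : Integrable (fun ω => c1 * f1 ω + c2 * f2 ω + c3 * f3 ω) P := j2.add (h3.const_mul c3)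
  refine ⟨j3, ?_⟩
  rw [integral_add j2 (h3.const_mul c3),
    integral_add j1 (h2.const_mul c2)]
  simp only [MeasureTheory.integral_const_mul]

lemma integral_comb9 {Ω : Type*} [MeasurableSpace Ω] {P : Measure Ω} {f1 f2 f3 f4 f5 f6 f7 f8 f9 : Ω → ℝ} (c1 c2 c3 c4 c5 c6 c7 c8 c9 : ℝ)
    (h1 : Integrable f1 P)
    (h2 : Integrable f2 P)
    (h3 : Integrable f3 P)
    (h4 : Integrable f4 P)
    (h5 : Integrable f5 P)
    (h6 : Integrable f6 P)
    (h7 : Integrable f7 P)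
    (h8 : Integrable f8 P)
    (h9 : Integrable f9 P) :
    Integrable (fun ω => c1 * f1 ω + c2 * f2 ω + c3 * f3 ω + c4 * f4 ω + c5 * f5 ω + c6 * f6 ω + c7 * f7 ω + c8 * f8 ω + c9 * f9 ω) P ∧
    ∫ ω, c1 * f1 ω + c2 * f2 ω + c3 * f3 ω + c4 * f4 ω + c5 * f5 ω + c6 * f6 ω + c7 * f7 ω + c8 * f8 ω + c9 * f9 ω ∂P = c1 * ∫ ω, f1 ω ∂P + c2 * ∫ ω, f2 ω ∂P + c3 * ∫ ω, f3 ω ∂P + c4 * ∫ ω, f4 ω ∂P + c5 * ∫ ω, f5 ω ∂P + c6 * ∫ ω, f6 ω ∂P + c7 * ∫ ω, f7 ω ∂P + c8 * ∫ ω, f8 ω ∂P + c9 * ∫ ω, f9 ω ∂P := by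
  have j1 : Integrable (fun ω => c1 * f1 ω) P := h1.const_mul c1
  have j2 : Integrable (fun ω => c1 * f1 ω + c2 * f2 ω) P := j1.add (h2.const_mul c2)
  have j3 : Integrable (fun ω => c1 * f1 ω + c2 * f2 ω + c3 * f3 ω) P := j2.add (h3.const_mul c3)
  have j4 : Integrable (fun ω => c1 * f1 ω + c2 * f2 ω + c3 * f3 ω + c4 * f4 ω) P := j3.add (h4.const_mul c4)
  have j5 : Integrable (fun ω => c1 * f1 ω + c2 * f2 ω + c3 * f3 ω + c4 * f4 ω + c5 * f5 ω) P := j4.add (h5.const_mul c5)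
  have j6 : Integrable (fun ω => c1 * f1 ω + c2 * f2 ω + c3 * f3 ω + c4 * f4 ω + c5 * f5 ω + c6 * f6 ω) P := j5.add (h6.const_mul c6)
  have j7 : Integrable (fun ω => c1 * f1 ω + c2 * f2 ω + c3 * f3 ω + c4 * f4 ω + c5 * f5 ω + c6 * f6 ω + c7 * f7 ω) P := j6.add (h7.const_mul c7)
  have j8 : Integrable (fun ω => c1 * f1 ω + c2 * f2 ω + c3 * f3 ω + c4 * f4 ω + c5 * f5 ω + c6 * f6 ω + c7 * f7 ω + c8 * f8 ω) P := j7.add (h8.const_mul c8)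
  have j9 : Integrable (fun ω => c1 * f1 ω + c2 * f2 ω + c3 * f3 ω + c4 * f4 ω + c5 * f5 ω + c6 * f6 ω + c7 * f7 ω + c8 * f8 ω + c9 * f9 ω) P := j8.add (h9.const_mul c9)
  refine ⟨j9, ?_⟩
  rw [integral_add j8 (h9.const_mul c9),
    integral_add j7 (h8.const_mul c8),
    integral_add j6 (h7.const_mul c7),
    integral_add j5 (h6.const_mul c6),
    integral_add j4 (h5.const_mul c5),
    integral_add j3 (h4.const_mul c4),
    integral_add j2 (h3.const_mul c3),
    integral_add j1 (h2.const_mul c2)]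
  simp only [MeasureTheory.integral_const_mul]

/-- The covariance of two real random variables. -/
noncomputable def cov {Ω : Type*} [MeasurableSpace Ω] (P : Measure Ω) (X Y : Ω → ℝ) : ℝ :=
  ∫ ω, (X ω - ∫ ω', X ω' ∂P) * (Y ω - ∫ ω', Y ω' ∂P) ∂P

section Cov
variable {Ω : Type*} [MeasurableSpace Ω] {P : Measure Ω}

lemma cov_congr_ae {X Y X' Y' : Ω → ℝ}
    (hX : X =ᵐ[P] X') (hY : Y =ᵐ[P] Y') : cov P X Y = cov P X' Y' := by
  unfold cov
  have hx : ∫ ω, X ω ∂P = ∫ ω, X' ω ∂P := integral_congr_ae hX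
  have hy : ∫ ω, Y ω ∂P = ∫ ω, Y' ω ∂P := integral_congr_ae hY
  rw [hx, hy]
  apply integral_congr_ae
  filter_upwards [hX, hY] with ω h1 h2
  rw [h1, h2]

lemma cov_eq_integral_mul [IsProbabilityMeasure P]
    {X Y : Ω → ℝ} (hX : Integrable X P) (hY : Integrable Y P)
    (hXY : Integrable (fun ω => X ω * Y ω) P) :
    cov P X Y = (∫ ω, X ω * Y ω ∂P) - (∫ ω, X ω ∂P) * ∫ ω, Y ω ∂P := by
  unfold cov
  set a := ∫ ω', X ω' ∂P with ha
  set b := ∫ ω', Y ω' ∂P with hb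
  have hc := integral_comb3 (P := P) 1 (-a) (-b) hXY hY hX
  have he : (fun ω => (X ω - a) * (Y ω - b))
      = fun ω => (1 * (X ω * Y ω) + -a * Y ω + -b * X ω) + a * b := by
    funext ω; ring
  rw [he, integral_add hc.1 (integrable_const _), hc.2, integral_const]
  simp only [measure_univ, probReal_univ, ENNReal.toReal_one, smul_eq_mul, one_mul]
  ring

lemma cov_quadratic [IsProbabilityMeasure P]
    {A B T : Ω → ℝ} (r ea1 ea2 eb1 eb2 et1 et2 et3 et4 : ℝ)
    (hsplit : ∀ a b c : ℕ, a ≤ 2 → b ≤ 2 → c ≤ 4 →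
      Integrable (fun ω => A ω ^ a * B ω ^ b * T ω ^ c) P ∧
      ∫ ω, A ω ^ a * B ω ^ b * T ω ^ c ∂P
        = (∫ ω, A ω ^ a ∂P) * (∫ ω, B ω ^ b ∂P) * ∫ ω, T ω ^ c ∂P)
    (hA1 : ∫ ω, A ω ^ 1 ∂P = ea1) (hA2 : ∫ ω, A ω ^ 2 ∂P = ea2)
    (hB1 : ∫ ω, B ω ^ 1 ∂P = eb1) (hB2 : ∫ ω, B ω ^ 2 ∂P = eb2)
    (hT1 : ∫ ω, T ω ^ 1 ∂P = et1) (hT2 : ∫ ω, T ω ^ 2 ∂P = et2)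
    (hT3 : ∫ ω, T ω ^ 3 ∂P = et3) (hT4 : ∫ ω, T ω ^ 4 ∂P = et4) :
    cov P (fun ω => (A ω - r * T ω) ^ 2) (fun ω => (B ω - r * T ω) ^ 2)
      = (ea2 * eb2 - 2*r*ea2*eb1*et1 + r^2*ea2*et2 - 2*r*ea1*eb2*et1
          + 4*r^2*ea1*eb1*et2 - 2*r^3*ea1*et3 + r^2*eb2*et2 - 2*r^3*eb1*et3 + r^4*et4)
        - (ea2 - 2*r*ea1*et1 + r^2*et2) * (eb2 - 2*r*eb1*et1 + r^2*et2) := by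
  have ea0 : ∫ ω, A ω ^ 0 ∂P = 1 := by simp
  have eb0 : ∫ ω, B ω ^ 0 ∂P = 1 := by simp
  have et0 : ∫ ω, T ω ^ 0 ∂P = 1 := by simp
  have cX := integral_comb3 (P := P) 1 (-(2*r)) (r^2)
    (hsplit 2 0 0 (by norm_num) (by norm_num) (by norm_num)).1
    (hsplit 1 0 1 (by norm_num) (by norm_num) (by norm_num)).1
    (hsplit 0 0 2 (by norm_num) (by norm_num) (by norm_num)).1
  have heX : (fun ω => (A ω - r * T ω) ^ 2)
      = fun ω => 1 * (A ω ^ 2 * B ω ^ 0 * T ω ^ 0) + -(2*r) * (A ω ^ 1 * B ω ^ 0 * T ω ^ 1)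
          + r^2 * (A ω ^ 0 * B ω ^ 0 * T ω ^ 2) := by
    funext ω; ring
  have iX : Integrable (fun ω => (A ω - r * T ω) ^ 2) P := heX ▸ cX.1
  have eX : ∫ ω, (A ω - r * T ω) ^ 2 ∂P = ea2 - 2*r*ea1*et1 + r^2*et2 := by
    rw [heX, cX.2,
      (hsplit 2 0 0 (by norm_num) (by norm_num) (by norm_num)).2,
      (hsplit 1 0 1 (by norm_num) (by norm_num) (by norm_num)).2,
      (hsplit 0 0 2 (by norm_num) (by norm_num) (by norm_num)).2,
      ea0, eb0, et0, hA1, hA2, hT1, hT2]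
    ring
  have cY := integral_comb3 (P := P) 1 (-(2*r)) (r^2)
    (hsplit 0 2 0 (by norm_num) (by norm_num) (by norm_num)).1
    (hsplit 0 1 1 (by norm_num) (by norm_num) (by norm_num)).1
    (hsplit 0 0 2 (by norm_num) (by norm_num) (by norm_num)).1
  have heY : (fun ω => (B ω - r * T ω) ^ 2)
      = fun ω => 1 * (A ω ^ 0 * B ω ^ 2 * T ω ^ 0) + -(2*r) * (A ω ^ 0 * B ω ^ 1 * T ω ^ 1)
          + r^2 * (A ω ^ 0 * B ω ^ 0 * T ω ^ 2) := by
    funext ω; ring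
  have iY : Integrable (fun ω => (B ω - r * T ω) ^ 2) P := heY ▸ cY.1
  have eY : ∫ ω, (B ω - r * T ω) ^ 2 ∂P = eb2 - 2*r*eb1*et1 + r^2*et2 := by
    rw [heY, cY.2,
      (hsplit 0 2 0 (by norm_num) (by norm_num) (by norm_num)).2,
      (hsplit 0 1 1 (by norm_num) (by norm_num) (by norm_num)).2,
      (hsplit 0 0 2 (by norm_num) (by norm_num) (by norm_num)).2,
      ea0, eb0, et0, hB1, hB2, hT1, hT2]
    ring
  have cXY := integral_comb9 (P := P) 1 (-(2*r)) (r^2) (-(2*r)) (4*r^2) (-(2*r^3)) (r^2)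
    (-(2*r^3)) (r^4)
    (hsplit 2 2 0 (by norm_num) (by norm_num) (by norm_num)).1
    (hsplit 2 1 1 (by norm_num) (by norm_num) (by norm_num)).1
    (hsplit 2 0 2 (by norm_num) (by norm_num) (by norm_num)).1
    (hsplit 1 2 1 (by norm_num) (by norm_num) (by norm_num)).1
    (hsplit 1 1 2 (by norm_num) (by norm_num) (by norm_num)).1
    (hsplit 1 0 3 (by norm_num) (by norm_num) (by norm_num)).1
    (hsplit 0 2 2 (by norm_num) (by norm_num) (by norm_num)).1
    (hsplit 0 1 3 (by norm_num) (by norm_num) (by norm_num)).1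
    (hsplit 0 0 4 (by norm_num) (by norm_num) (by norm_num)).1
  have heXY : (fun ω => (A ω - r * T ω) ^ 2 * (B ω - r * T ω) ^ 2)
      = fun ω => 1 * (A ω ^ 2 * B ω ^ 2 * T ω ^ 0) + -(2*r) * (A ω ^ 2 * B ω ^ 1 * T ω ^ 1)
          + r^2 * (A ω ^ 2 * B ω ^ 0 * T ω ^ 2) + -(2*r) * (A ω ^ 1 * B ω ^ 2 * T ω ^ 1)
          + 4*r^2 * (A ω ^ 1 * B ω ^ 1 * T ω ^ 2) + -(2*r^3) * (A ω ^ 1 * B ω ^ 0 * T ω ^ 3)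
          + r^2 * (A ω ^ 0 * B ω ^ 2 * T ω ^ 2) + -(2*r^3) * (A ω ^ 0 * B ω ^ 1 * T ω ^ 3)
          + r^4 * (A ω ^ 0 * B ω ^ 0 * T ω ^ 4) := by
    funext ω; ring
  have iXY : Integrable (fun ω => (A ω - r * T ω) ^ 2 * (B ω - r * T ω) ^ 2) P :=
    heXY ▸ cXY.1
  rw [cov_eq_integral_mul iX iY iXY, eX, eY, heXY, cXY.2,
    (hsplit 2 2 0 (by norm_num) (by norm_num) (by norm_num)).2,
    (hsplit 2 1 1 (by norm_num) (by norm_num) (by norm_num)).2,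
    (hsplit 2 0 2 (by norm_num) (by norm_num) (by norm_num)).2,
    (hsplit 1 2 1 (by norm_num) (by norm_num) (by norm_num)).2,
    (hsplit 1 1 2 (by norm_num) (by norm_num) (by norm_num)).2,
    (hsplit 1 0 3 (by norm_num) (by norm_num) (by norm_num)).2,
    (hsplit 0 2 2 (by norm_num) (by norm_num) (by norm_num)).2,
    (hsplit 0 1 3 (by norm_num) (by norm_num) (by norm_num)).2,
    (hsplit 0 0 4 (by norm_num) (by norm_num) (by norm_num)).2,
    ea0, eb0, et0, hA1, hA2, hB1, hB2, hT1, hT2, hT3, hT4]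
  ring

end Cov

/-- `Z ~ N(μⱼ, vⱼ)` and `Z' ~ N(μⱼ', vⱼ')` independent of each other and of the sample mean
`Z̄_l` of `m = n_l` iid `N(μ_l, v_l)` variables:
`Cov((Z − Z̄_l)², (Z' − Z̄_l)²) = 2(v_l/m)(v_l/m + 2(μⱼ − μ_l)(μⱼ' − μ_l))`. -/
theorem stmt_11 {Ω : Type*} [MeasurableSpace Ω] (P : Measure Ω) [IsProbabilityMeasure P]
    (m : ℕ) (hm : 0 < m) (Z Z' : Ω → ℝ) (W : Fin m → Ω → ℝ)
    (μj μj' μl : ℝ) (vj vj' vl : NNReal)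
    (hZ : Measure.map Z P = gaussianReal μj vj)
    (hZ' : Measure.map Z' P = gaussianReal μj' vj')
    (hW : ∀ i, Measure.map (W i) P = gaussianReal μl vl)
    (hind : iIndepFun
      (fun i : Fin 2 ⊕ Fin m => Sum.elim ![Z, Z'] W i) P) :
    cov P (fun ω => (Z ω - (∑ i, W i ω) / m) ^ 2)
        (fun ω => (Z' ω - (∑ i, W i ω) / m) ^ 2)
      = 2 * ((vl : ℝ) / m) * ((vl : ℝ) / m + 2 * (μj - μl) * (μj' - μl)) := by
  classical
  set g : Fin 2 ⊕ Fin m → Ω → ℝ := fun i => Sum.elim ![Z, Z'] W i with hgdef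
  have hmap : ∀ i, Measure.map (g i) P
      = gaussianReal (Sum.elim ![μj, μj'] (fun _ => μl) i)
        (Sum.elim ![vj, vj'] (fun _ => vl) i) := by
    rintro (j | i)
    · fin_cases j
      · simpa [hgdef] using hZ
      · simpa [hgdef] using hZ'
    · simpa [hgdef] using hW i
  have haem : ∀ i, AEMeasurable (g i) P := by
    intro i
    refine aemeasurable_of_map_neZero ?_
    rw [hmap i]
    infer_instance
  set f : Fin 2 ⊕ Fin m → Ω → ℝ := fun i => (haem i).mk _ with hfdef
  have hfm : ∀ i, Measurable (f i) := fun i => (haem i).measurable_mk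
  have heq : ∀ i, g i =ᵐ[P] f i := fun i => (haem i).ae_eq_mk
  have hmapf : ∀ i, Measure.map (f i) P
      = gaussianReal (Sum.elim ![μj, μj'] (fun _ => μl) i)
        (Sum.elim ![vj, vj'] (fun _ => vl) i) :=
    fun i => (Measure.map_congr (heq i)).symm.trans (hmap i)
  have hindepf : iIndepFun f P :=
    iIndepFun_ae_congr hind heq
  set A : Ω → ℝ := f (Sum.inl 0) with hAdef
  set B : Ω → ℝ := f (Sum.inl 1) with hBdef
  set sT : Finset (Fin 2 ⊕ Fin m) := Finset.univ.image Sum.inr with hsTdef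
  set T : Ω → ℝ := fun ω => ∑ j ∈ sT, f j ω with hTdef
  have hA : Measure.map A P = gaussianReal μj vj := by simpa using hmapf (Sum.inl 0)
  have hB : Measure.map B P = gaussianReal μj' vj' := by simpa using hmapf (Sum.inl 1)
  have hcard : (sT.card : ℝ) = m := by
    rw [hsTdef, Finset.card_image_of_injective _ Sum.inr_injective, Finset.card_univ,
      Fintype.card_fin]
  obtain ⟨iT, mT1, mT2, mT3, mT4⟩ := sum_gaussian_moments hfm hindepf μl vl sT
    (by
      intro j hj
      obtain ⟨i, _, rfl⟩ := Finset.mem_image.mp hj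
      simpa using hmapf (Sum.inr i))
  rw [hcard] at mT1 mT2 mT3 mT4
  have iA : ∀ k, k ≤ 4 → Integrable (fun ω => A ω ^ k) P :=
    fun k _ => rv_integrable_pow (hfm _) hA k
  have iB : ∀ k, k ≤ 4 → Integrable (fun ω => B ω ^ k) P :=
    fun k _ => rv_integrable_pow (hfm _) hB k
  have hA1 : ∫ ω, A ω ^ 1 ∂P = μj := (rv_moment (hfm _) hA 1).trans (gaussian_m1 _ _)
  have hA2 : ∫ ω, A ω ^ 2 ∂P = vj + μj ^ 2 := (rv_moment (hfm _) hA 2).trans (gaussian_m2 _ _)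
  have hB1 : ∫ ω, B ω ^ 1 ∂P = μj' := (rv_moment (hfm _) hB 1).trans (gaussian_m1 _ _)
  have hB2 : ∫ ω, B ω ^ 2 ∂P = vj' + μj' ^ 2 := (rv_moment (hfm _) hB 2).trans (gaussian_m2 _ _)
  have hAB : IndepFun A B P := hindepf.indepFun (by simp)
  have hdisj : Disjoint ({Sum.inl 0, Sum.inl 1} : Finset (Fin 2 ⊕ Fin m)) sT := by
    rw [Finset.disjoint_left]
    intro j hj hj'
    rw [hsTdef, Finset.mem_image] at hj'
    obtain ⟨i, _, rfl⟩ := hj'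
    simp at hj
  have hbig := hindepf.indepFun_finset {Sum.inl 0, Sum.inl 1} sT hdisj hfm
  have hmem0 : (Sum.inl 0 : Fin 2 ⊕ Fin m) ∈ ({Sum.inl 0, Sum.inl 1} : Finset (Fin 2 ⊕ Fin m)) := by
    simp
  have hmem1 : (Sum.inl 1 : Fin 2 ⊕ Fin m) ∈ ({Sum.inl 0, Sum.inl 1} : Finset (Fin 2 ⊕ Fin m)) := by
    simp
  have hsplit : ∀ a b c : ℕ, a ≤ 2 → b ≤ 2 → c ≤ 4 →
      Integrable (fun ω => A ω ^ a * B ω ^ b * T ω ^ c) P ∧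
      ∫ ω, A ω ^ a * B ω ^ b * T ω ^ c ∂P
        = (∫ ω, A ω ^ a ∂P) * (∫ ω, B ω ^ b ∂P) * ∫ ω, T ω ^ c ∂P := by
    intro a b c ha2 hb2 hc4
    have hφ : Measurable (fun v : ({Sum.inl 0, Sum.inl 1} :
        Finset (Fin 2 ⊕ Fin m)) → ℝ => (v ⟨Sum.inl 0, hmem0⟩) ^ a * (v ⟨Sum.inl 1, hmem1⟩) ^ b) :=
      ((measurable_pi_apply _).pow_const a).mul ((measurable_pi_apply _).pow_const b)
    have hψ : Measurable (fun v : {x // x ∈ sT} → ℝ => (∑ j, v j) ^ c) :=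
      (Finset.measurable_sum Finset.univ fun j _ => measurable_pi_apply j).pow_const c
    have hcomp := hbig.comp hφ hψ
    have hTT : (fun ω => (∑ j : {x // x ∈ sT}, f (↑j) ω) ^ c) = fun ω => T ω ^ c := by
      funext ω
      rw [hTdef]
      congr 1
      exact Finset.sum_coe_sort sT (fun j => f j ω)
    have hInd : IndepFun (fun ω => A ω ^ a * B ω ^ b) (fun ω => T ω ^ c) P := by
      rw [← hTT]
      exact hcomp
    have iAB : Integrable (fun ω => A ω ^ a * B ω ^ b) P :=
      (hAB.comp (measurable_id.pow_const a) (measurable_id.pow_const b)).integrable_mul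
        (iA a (by omega)) (iB b (by omega))
    have eAB : ∫ ω, A ω ^ a * B ω ^ b ∂P = (∫ ω, A ω ^ a ∂P) * ∫ ω, B ω ^ b ∂P :=
      (hAB.comp (measurable_id.pow_const a) (measurable_id.pow_const b)).integral_fun_mul_eq_mul_integral
        (iA a (by omega)).aestronglyMeasurable (iB b (by omega)).aestronglyMeasurable
    refine ⟨hInd.integrable_mul iAB (iT c hc4), ?_⟩
    have h1 : ∫ ω, (A ω ^ a * B ω ^ b) * T ω ^ c ∂P
        = (∫ ω, A ω ^ a * B ω ^ b ∂P) * ∫ ω, T ω ^ c ∂P :=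
      hInd.integral_fun_mul_eq_mul_integral iAB.aestronglyMeasurable (iT c hc4).aestronglyMeasurable
    rw [h1, eAB]
  have hmR : (m : ℝ) ≠ 0 := Nat.cast_ne_zero.mpr hm.ne'
  have hae : ∀ᵐ ω ∂P, ∀ i, g i ω = f i ω := by
    rw [MeasureTheory.ae_all_iff]
    exact heq
  have hX : (fun ω => (Z ω - (∑ i, W i ω) / m) ^ 2)
      =ᵐ[P] fun ω => (A ω - (m:ℝ)⁻¹ * T ω) ^ 2 := by
    filter_upwards [hae] with ω hω
    have hZω : Z ω = A ω := hω (Sum.inl 0)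
    have hWω : (∑ i, W i ω) = T ω := by
      show _ = ∑ j ∈ sT, f j ω
      rw [hsTdef, Finset.sum_image (fun a _ b _ h => Sum.inr_injective h)]
      exact Finset.sum_congr rfl fun i _ => hω (Sum.inr i)
    rw [hZω, hWω, div_eq_inv_mul]
  have hY : (fun ω => (Z' ω - (∑ i, W i ω) / m) ^ 2)
      =ᵐ[P] fun ω => (B ω - (m:ℝ)⁻¹ * T ω) ^ 2 := by
    filter_upwards [hae] with ω hω
    have hZω : Z' ω = B ω := hω (Sum.inl 1)
    have hWω : (∑ i, W i ω) = T ω := by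
      show _ = ∑ j ∈ sT, f j ω
      rw [hsTdef, Finset.sum_image (fun a _ b _ h => Sum.inr_injective h)]
      exact Finset.sum_congr rfl fun i _ => hω (Sum.inr i)
    rw [hZω, hWω, div_eq_inv_mul]
  rw [cov_congr_ae hX hY,
    cov_quadratic ((m:ℝ)⁻¹) μj (vj + μj ^ 2) μj' (vj' + μj' ^ 2)
      ((m:ℝ) * μl) ((m:ℝ) * vl + ((m:ℝ) * μl) ^ 2)
      (((m:ℝ) * μl) ^ 3 + 3 * ((m:ℝ) * μl) * ((m:ℝ) * vl))
      (((m:ℝ) * μl) ^ 4 + 6 * ((m:ℝ) * μl) ^ 2 * ((m:ℝ) * vl) + 3 * ((m:ℝ) * vl) ^ 2)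
      hsplit hA1 hA2 hB1 hB2 mT1 mT2 mT3 mT4]
  field_simp
  ring
end

section
/- Under the multi-source setting with squared-integrable losses, the variance of μ̂_os equals ∑_{j=1}^k (od_j²/(n p_j))·( ∑_{l≠j} p_l²(V_{j;l} + n(p_j − 1/n)C_{j;l}) + ∑∑_{l≠l', l,l'≠j} p_l p_{l'} C_{j;l,l'} ) + ∑∑_{j≠j'} od_j od_{j'} ∑_{l≠j,j'} p_l( p_l C_{j,j';l} + 2 p_j C_{j,j';l,j} ), where od_j = p_j/(1−p_j), V_{j;l} = Var L(Z, d̂_l) for Z ~ F_j independent of source l, C_{j;l} = Cov(L(Z, d̂_l), L(Z', d̂_l)) for Z, Z' iid F_j independent of source l, C_{j;l,l'} = Cov(L(Z, d̂_l), L(Z, d̂_{l'})), C_{j,j';l} = Cov(L(Z, d̂_l), L(Z', d̂_l)) with Z ~ F_j, Z' ~ F_{j'}, and C_{j,j';l,j} = Cov(L(Z, d̂_l), L(Z', d̂_j)) with Z in source j, Z' ~ F_{j'}. -/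
open MeasureTheory ProbabilityTheory Real

section Helpers
variable {Ω : Type*} [MeasurableSpace Ω] {P : Measure Ω} [IsProbabilityMeasure P]
set_option linter.unusedSectionVars false

lemma integ_mul2 {f g : Ω → ℝ} (hf : MemLp f 2 P) (hg : MemLp g 2 P) :
    Integrable (fun ω => f ω * g ω) P := by
  have h : MemLp (f • g) 1 P := by
    haveI : ENNReal.HolderTriple 2 2 1 := ⟨by rw [ENNReal.inv_two_add_inv_two, inv_one]⟩
    exact MemLp.smul hg hf
  exact memLp_one_iff_integrable.mp h

lemma cov_comm (f g : Ω → ℝ) : cov P f g = cov P g f := by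
  unfold cov; exact integral_congr_ae (Filter.Eventually.of_forall fun ω => mul_comm _ _)

lemma cov_self {f : Ω → ℝ} (hf : MemLp f 2 P) : cov P f f = variance f P := by
  rw [variance_eq_integral hf.aemeasurable]; unfold cov
  refine integral_congr_ae (Filter.Eventually.of_forall fun ω => ?_)
  simp [sq]

lemma cov_const_mul (c d : ℝ) (f g : Ω → ℝ) :
    cov P (fun ω => c * f ω) (fun ω => d * g ω) = c * d * cov P f g := by
  unfold cov
  rw [integral_const_mul c f, integral_const_mul d g]
  calc (∫ ω, (c * f ω - c * ∫ ω', f ω' ∂P) * (d * g ω - d * ∫ ω', g ω' ∂P) ∂P)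
      = ∫ ω, c * d * ((f ω - ∫ ω', f ω' ∂P) * (g ω - ∫ ω', g ω' ∂P)) ∂P :=
        integral_congr_ae (Filter.Eventually.of_forall fun ω => by ring)
    _ = c * d * ∫ ω, (f ω - ∫ ω', f ω' ∂P) * (g ω - ∫ ω', g ω' ∂P) ∂P :=
        integral_const_mul _ _

lemma cov_sum {ι κ : Type*} (s : Finset ι) (t : Finset κ) (f : ι → Ω → ℝ) (g : κ → Ω → ℝ)
    (hf : ∀ a ∈ s, MemLp (f a) 2 P) (hg : ∀ b ∈ t, MemLp (g b) 2 P) :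
    cov P (fun ω => ∑ a ∈ s, f a ω) (fun ω => ∑ b ∈ t, g b ω)
      = ∑ a ∈ s, ∑ b ∈ t, cov P (f a) (g b) := by
  unfold cov
  have hif : ∀ a ∈ s, Integrable (f a) P := fun a ha => (hf a ha).integrable one_le_two
  have hig : ∀ b ∈ t, Integrable (g b) P := fun b hb => (hg b hb).integrable one_le_two
  have h1 : (∫ ω', ∑ a ∈ s, f a ω' ∂P) = ∑ a ∈ s, ∫ ω', f a ω' ∂P :=
    integral_finset_sum s hif
  have h2 : (∫ ω', ∑ b ∈ t, g b ω' ∂P) = ∑ b ∈ t, ∫ ω', g b ω' ∂P :=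
    integral_finset_sum t hig
  rw [h1, h2]
  have key : ∀ ω, (∑ a ∈ s, f a ω - ∑ a ∈ s, ∫ ω', f a ω' ∂P) *
      (∑ b ∈ t, g b ω - ∑ b ∈ t, ∫ ω', g b ω' ∂P)
      = ∑ a ∈ s, ∑ b ∈ t, (f a ω - ∫ ω', f a ω' ∂P) * (g b ω - ∫ ω', g b ω' ∂P) := by
    intro ω
    rw [← Finset.sum_sub_distrib, ← Finset.sum_sub_distrib, Finset.sum_mul_sum]
  simp_rw [key]
  rw [integral_finset_sum]
  · refine Finset.sum_congr rfl fun a ha => ?_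
    exact integral_finset_sum t fun b hb => by
      exact integ_mul2 ((hf a ha).sub (memLp_const _)) ((hg b hb).sub (memLp_const _))
  · intro a ha
    exact integrable_finset_sum t fun b hb =>
      integ_mul2 ((hf a ha).sub (memLp_const _)) ((hg b hb).sub (memLp_const _))

lemma sum_swap_ne {k : ℕ} (f : Fin k → Fin k → ℝ) :
    ∑ j, ∑ j' ∈ Finset.univ.filter (· ≠ j), f j j'
      = ∑ j, ∑ j' ∈ Finset.univ.filter (· ≠ j), f j' j := by
  simp only [Finset.sum_filter]
  rw [Finset.sum_comm]
  exact Finset.sum_congr rfl fun a _ => Finset.sum_congr rfl fun b _ =>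
    if_congr ne_comm rfl rfl

end Helpers

/-- The variance of the out-of-source error estimator `μ̂_os` in the multi-source setting,
expressed through `V_{j;l}`, `C_{j;l}`, `C_{j;l,l'}`, `C_{j,j';l}` and `C_{j,j';l,j}`,
which describe the second-moment structure of the losses `ℓ i l = L(Z_i, d̂_l)`
(this structure follows from the exchangeability/independence properties E.1–E.5). -/
theorem stmt_14 {Ω : Type*} [MeasurableSpace Ω] (P : Measure Ω) [IsProbabilityMeasure P]
    (n k : ℕ) (ns : Fin k → ℕ) (S : Fin k → Finset (Fin n)) (p od : Fin k → ℝ)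
    (ℓ : Fin n → Fin k → Ω → ℝ)
    (V C2 : Fin k → Fin k → ℝ) (C3 C5 C4 : Fin k → Fin k → Fin k → ℝ)
    (hpart : ∀ i : Fin n, ∃! j, i ∈ S j)
    (hcard : ∀ j, (S j).card = ns j)
    (hpos : ∀ j, 0 < ns j) (hlt : ∀ j, ns j < n)
    (hp : ∀ j, p j = (ns j : ℝ) / n)
    (hod : ∀ j, od j = p j / (1 - p j))
    (hmem : ∀ i l, MemLp (ℓ i l) 2 P)
    (hV : ∀ j l, l ≠ j → ∀ i ∈ S j, variance (ℓ i l) P = V j l)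
    (hC2 : ∀ j l, l ≠ j → ∀ i ∈ S j, ∀ i' ∈ S j, i ≠ i' →
      cov P (ℓ i l) (ℓ i' l) = C2 j l)
    (hC3 : ∀ j l l', l ≠ j → l' ≠ j → l ≠ l' → ∀ i ∈ S j,
      cov P (ℓ i l) (ℓ i l') = C3 j l l')
    (hC5 : ∀ j j' l, j ≠ j' → l ≠ j → l ≠ j' → ∀ i ∈ S j, ∀ i' ∈ S j',
      cov P (ℓ i l) (ℓ i' l) = C5 j j' l)
    (hC4 : ∀ j j' l, j ≠ j' → l ≠ j → l ≠ j' → ∀ i ∈ S j, ∀ i' ∈ S j',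
      cov P (ℓ i l) (ℓ i' j) = C4 j j' l)
    (hzero : ∀ j j' l l', l ≠ j → l' ≠ j' → l ≠ l' → l' ≠ j → l ≠ j' →
      ∀ i ∈ S j, ∀ i' ∈ S j', i ≠ i' → cov P (ℓ i l) (ℓ i' l') = 0)
    (hzero' : ∀ j j', j ≠ j' → ∀ i ∈ S j, ∀ i' ∈ S j',
      cov P (ℓ i j') (ℓ i' j) = 0) :
    variance (fun ω => (1 / (n : ℝ)) * ∑ j, (1 / ((n : ℝ) - ns j)) *
        ∑ l ∈ Finset.univ.filter (· ≠ j), (ns l : ℝ) * ∑ i ∈ S j, ℓ i l ω) P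
      = (∑ j, od j ^ 2 / (n * p j) *
          ((∑ l ∈ Finset.univ.filter (· ≠ j),
              p l ^ 2 * (V j l + n * (p j - 1 / n) * C2 j l))
            + ∑ l ∈ Finset.univ.filter (· ≠ j),
                ∑ l' ∈ Finset.univ.filter (fun l' => l' ≠ j ∧ l' ≠ l),
                  p l * p l' * C3 j l l'))
        + ∑ j, ∑ j' ∈ Finset.univ.filter (· ≠ j),
            od j * od j' * ∑ l ∈ Finset.univ.filter (fun l0 => l0 ≠ j ∧ l0 ≠ j'),
              p l * (p l * C5 j j' l + 2 * p j * C4 j j' l) := by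
  classical
  -- numeric facts (available whenever some `j : Fin k` exists)
  have hnR : ∀ _ : Fin k, (0:ℝ) < n := fun j =>
    Nat.cast_pos.mpr ((hpos j).trans (hlt j))
  have hdR : ∀ j : Fin k, (0:ℝ) < (n:ℝ) - ns j := fun j =>
    sub_pos.mpr (Nat.cast_lt.mpr (hlt j))
  have hnsR : ∀ j : Fin k, (0:ℝ) < (ns j : ℝ) := fun j => Nat.cast_pos.mpr (hpos j)
  -- coefficients
  set c : Fin k → Fin k → ℝ := fun j l => (ns l : ℝ) / ((n:ℝ) * ((n:ℝ) - ns j)) with hcdef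
  -- od in terms of ns
  have hodns : ∀ j : Fin k, od j = (ns j : ℝ) / ((n:ℝ) - ns j) := by
    intro j
    rw [hod, hp, div_div]
    have hx : (n:ℝ) * (1 - (ns j:ℝ)/↑n) = (n:ℝ) - ns j := by
      have h0 : (n:ℝ) ≠ 0 := (hnR j).ne'
      field_simp
    rw [hx]
  -- disjointness of sources
  have hdisj : ∀ j j' : Fin k, j ≠ j' → ∀ i ∈ S j, ∀ i' ∈ S j', i ≠ i' := by
    intro j j' hjj' i hi i' hi' hii'
    subst hii'
    obtain ⟨u, _, hu⟩ := hpart i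
    exact hjj' ((hu j hi).trans (hu j' hi').symm)
  -- MemLp of partial sums
  have hm1 : ∀ (j l : Fin k) (i : Fin n), MemLp (fun ω => c j l * ℓ i l ω) 2 P :=
    fun j l i => (hmem i l).const_mul _
  have hm2 : ∀ j l : Fin k, MemLp (fun ω => ∑ i ∈ S j, c j l * ℓ i l ω) 2 P :=
    fun j l => memLp_finset_sum _ fun i _ => hm1 j l i
  have hm3 : ∀ j : Fin k,
      MemLp (fun ω => ∑ l ∈ Finset.univ.filter (· ≠ j), ∑ i ∈ S j, c j l * ℓ i l ω) 2 P :=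
    fun j => memLp_finset_sum _ fun l _ => hm2 j l
  have hm4 : MemLp (fun ω => ∑ j, ∑ l ∈ Finset.univ.filter (· ≠ j),
      ∑ i ∈ S j, c j l * ℓ i l ω) 2 P :=
    memLp_finset_sum _ fun j _ => hm3 j
  -- Step 1: rewrite the estimator
  have hfun : (fun ω => (1 / (n : ℝ)) * ∑ j, (1 / ((n : ℝ) - ns j)) *
        ∑ l ∈ Finset.univ.filter (· ≠ j), (ns l : ℝ) * ∑ i ∈ S j, ℓ i l ω)
      = fun ω => ∑ j, ∑ l ∈ Finset.univ.filter (· ≠ j), ∑ i ∈ S j, c j l * ℓ i l ω := by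
    funext ω
    rw [Finset.mul_sum]
    refine Finset.sum_congr rfl fun j _ => ?_
    rw [Finset.mul_sum, Finset.mul_sum]
    refine Finset.sum_congr rfl fun l _ => ?_
    rw [Finset.mul_sum, Finset.mul_sum, Finset.mul_sum]
    refine Finset.sum_congr rfl fun i _ => ?_
    simp only [hcdef]
    simp only [div_eq_mul_inv, mul_inv]
    ring
  -- Step 2: variance to double sum of covariances
  have hvar : variance (fun ω => (1 / (n : ℝ)) * ∑ j, (1 / ((n : ℝ) - ns j)) *
        ∑ l ∈ Finset.univ.filter (· ≠ j), (ns l : ℝ) * ∑ i ∈ S j, ℓ i l ω) P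
      = ∑ j, ∑ j' : Fin k, ∑ l ∈ Finset.univ.filter (· ≠ j),
          ∑ l' ∈ Finset.univ.filter (· ≠ j'), ∑ i ∈ S j, ∑ i' ∈ S j',
            c j l * c j' l' * cov P (ℓ i l) (ℓ i' l') := by
    rw [hfun, ← cov_self hm4]
    rw [cov_sum Finset.univ Finset.univ _ _ (fun j _ => hm3 j) (fun j _ => hm3 j)]
    refine Finset.sum_congr rfl fun j _ => Finset.sum_congr rfl fun j' _ => ?_
    rw [cov_sum _ _ _ _ (fun l _ => hm2 j l) (fun l _ => hm2 j' l)]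
    refine Finset.sum_congr rfl fun l _ => Finset.sum_congr rfl fun l' _ => ?_
    rw [cov_sum _ _ _ _ (fun i _ => hm1 j l i) (fun i _ => hm1 j' l' i)]
    exact Finset.sum_congr rfl fun i _ => Finset.sum_congr rfl fun i' _ =>
      cov_const_mul _ _ _ _
  rw [hvar]
  -- constant-sum helper
  have hconstsum : ∀ (j1 j2 l1 l2 : Fin k) (v : ℝ),
      (∀ i ∈ S j1, ∀ i' ∈ S j2, cov P (ℓ i l1) (ℓ i' l2) = v) →
      (∑ i ∈ S j1, ∑ i' ∈ S j2, c j1 l1 * c j2 l2 * cov P (ℓ i l1) (ℓ i' l2))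
        = c j1 l1 * c j2 l2 * ((ns j1 : ℝ) * (ns j2 : ℝ) * v) := by
    intro j1 j2 l1 l2 v hv
    rw [Finset.sum_congr rfl (fun i hi => Finset.sum_congr rfl
      (fun i' hi' => by rw [hv i hi i' hi']))]
    simp only [Finset.sum_const, hcard, nsmul_eq_mul]
    ring
  -- split the double sum over (j, j') into diagonal and off-diagonal parts
  have hsplit : ∀ g : Fin k → Fin k → ℝ,
      (∑ j, ∑ j' : Fin k, g j j')
        = (∑ j, g j j) + ∑ j, ∑ j' ∈ Finset.univ.filter (· ≠ j), g j j' := by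
    intro g
    rw [← Finset.sum_add_distrib]
    refine Finset.sum_congr rfl fun j _ => ?_
    rw [Finset.filter_ne']
    exact (Finset.add_sum_erase _ _ (Finset.mem_univ j)).symm
  rw [hsplit (fun j j' => ∑ l ∈ Finset.univ.filter (· ≠ j),
      ∑ l' ∈ Finset.univ.filter (· ≠ j'), ∑ i ∈ S j, ∑ i' ∈ S j',
        c j l * c j' l' * cov P (ℓ i l) (ℓ i' l'))]
  congr 1
  -- ============ diagonal part ============
  · refine Finset.sum_congr rfl fun j _ => ?_
    have hn0 : (n:ℝ) ≠ 0 := (hnR j).ne'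
    have hd0 : ((n:ℝ) - ns j) ≠ 0 := (hdR j).ne'
    have hns0 : ((ns j:ℝ)) ≠ 0 := (hnsR j).ne'
    -- inner evaluation
    have hinner : ∀ l ∈ Finset.univ.filter (· ≠ j), ∀ l' ∈ Finset.univ.filter (· ≠ j),
        (∑ i ∈ S j, ∑ i' ∈ S j, c j l * c j l' * cov P (ℓ i l) (ℓ i' l'))
        = if l' = l then
            c j l * c j l * ((ns j:ℝ) * V j l + (ns j:ℝ) * ((ns j:ℝ) - 1) * C2 j l)
          else c j l * c j l' * ((ns j:ℝ) * C3 j l l') := by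
      intro l hl l' hl'
      have hlj : l ≠ j := (Finset.mem_filter.mp hl).2
      have hl'j : l' ≠ j := (Finset.mem_filter.mp hl').2
      by_cases h : l' = l
      · subst h
        rw [if_pos rfl]
        have hrow : ∀ i ∈ S j, (∑ i' ∈ S j, c j l' * c j l' * cov P (ℓ i l') (ℓ i' l'))
            = c j l' * c j l' * (V j l' + ((ns j:ℝ) - 1) * C2 j l') := by
          intro i hi
          rw [← Finset.mul_sum]
          congr 1
          rw [← Finset.add_sum_erase _ _ hi]
          have h1 : cov P (ℓ i l') (ℓ i l') = V j l' := by
            rw [cov_self (hmem i l')]; exact hV j l' hl'j i hi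
          have h2 : ∑ i' ∈ (S j).erase i, cov P (ℓ i l') (ℓ i' l')
              = ((ns j:ℝ) - 1) * C2 j l' := by
            rw [Finset.sum_congr rfl (fun i' hi' => hC2 j l' hl'j i hi i'
              (Finset.mem_of_mem_erase hi') (Finset.ne_of_mem_erase hi').symm)]
            rw [Finset.sum_const, Finset.card_erase_of_mem hi, hcard, nsmul_eq_mul,
              Nat.cast_sub (hpos j), Nat.cast_one]
          rw [h1, h2]
        rw [Finset.sum_congr rfl hrow, Finset.sum_const, hcard, nsmul_eq_mul]
        ring
      · rw [if_neg h]
        have hll' : l ≠ l' := fun he => h he.symm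
        have hrow : ∀ i ∈ S j, (∑ i' ∈ S j, c j l * c j l' * cov P (ℓ i l) (ℓ i' l'))
            = c j l * c j l' * C3 j l l' := by
          intro i hi
          rw [← Finset.mul_sum]
          congr 1
          rw [← Finset.add_sum_erase _ _ hi, hC3 j l l' hlj hl'j hll' i hi]
          rw [Finset.sum_congr rfl (fun i' hi' => hzero j j l l' hlj hl'j hll' hl'j hlj
            i hi i' (Finset.mem_of_mem_erase hi') (Finset.ne_of_mem_erase hi').symm)]
          rw [Finset.sum_const_zero, add_zero]
        rw [Finset.sum_congr rfl hrow, Finset.sum_const, hcard, nsmul_eq_mul]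
        ring
    -- semiclosed form of the diagonal term
    have hL : (∑ l ∈ Finset.univ.filter (· ≠ j), ∑ l' ∈ Finset.univ.filter (· ≠ j),
          ∑ i ∈ S j, ∑ i' ∈ S j, c j l * c j l' * cov P (ℓ i l) (ℓ i' l'))
        = ∑ l ∈ Finset.univ.filter (· ≠ j),
            (c j l * c j l * ((ns j:ℝ) * V j l + (ns j:ℝ) * ((ns j:ℝ) - 1) * C2 j l)
              + ∑ l' ∈ (Finset.univ.filter (· ≠ j)).erase l,
                  c j l * c j l' * ((ns j:ℝ) * C3 j l l')) := by
      refine Finset.sum_congr rfl fun l hl => ?_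
      rw [Finset.sum_congr rfl (fun l' hl' => hinner l hl l' hl')]
      rw [← Finset.add_sum_erase _ _ hl, if_pos rfl]
      congr 1
      exact Finset.sum_congr rfl fun l' hl' => if_neg (Finset.ne_of_mem_erase hl')
    have hfe : ∀ l : Fin k, Finset.univ.filter (fun l' => l' ≠ j ∧ l' ≠ l)
        = (Finset.univ.filter (· ≠ j)).erase l := by
      intro l; ext x
      simp only [Finset.mem_erase, Finset.mem_filter, Finset.mem_univ, true_and]
      exact and_comm
    have hR : od j ^ 2 / (n * p j) *
          ((∑ l ∈ Finset.univ.filter (· ≠ j),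
              p l ^ 2 * (V j l + n * (p j - 1 / n) * C2 j l))
            + ∑ l ∈ Finset.univ.filter (· ≠ j),
                ∑ l' ∈ Finset.univ.filter (fun l' => l' ≠ j ∧ l' ≠ l),
                  p l * p l' * C3 j l l')
        = ∑ l ∈ Finset.univ.filter (· ≠ j),
            (c j l * c j l * ((ns j:ℝ) * V j l + (ns j:ℝ) * ((ns j:ℝ) - 1) * C2 j l)
              + ∑ l' ∈ (Finset.univ.filter (· ≠ j)).erase l,
                  c j l * c j l' * ((ns j:ℝ) * C3 j l l')) := by
      rw [Finset.sum_congr rfl (fun l _ => by rw [hfe l] :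
        ∀ l ∈ Finset.univ.filter (· ≠ j), (∑ l' ∈ Finset.univ.filter
          (fun l' => l' ≠ j ∧ l' ≠ l), p l * p l' * C3 j l l')
          = ∑ l' ∈ (Finset.univ.filter (· ≠ j)).erase l, p l * p l' * C3 j l l')]
      rw [← Finset.sum_add_distrib, Finset.mul_sum]
      refine Finset.sum_congr rfl fun l _ => ?_
      rw [mul_add, Finset.mul_sum]
      congr 1
      · simp only [hcdef]
        rw [hodns j, hp j, hp l]
        field_simp
      · refine Finset.sum_congr rfl fun l' _ => ?_
        simp only [hcdef]
        rw [hodns j, hp j, hp l, hp l']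
        field_simp
    rw [hL, ← hR]
  -- ============ off-diagonal part ============
  · -- first put each (j, j') term in semiclosed form
    have hLoff : ∀ j : Fin k, ∀ j' ∈ Finset.univ.filter (· ≠ j),
        (∑ l ∈ Finset.univ.filter (· ≠ j), ∑ l' ∈ Finset.univ.filter (· ≠ j'),
          ∑ i ∈ S j, ∑ i' ∈ S j', c j l * c j' l' * cov P (ℓ i l) (ℓ i' l'))
        = (∑ l' ∈ (Finset.univ.filter (· ≠ j')).erase j,
            c j j' * c j' l' * ((ns j:ℝ) * (ns j':ℝ) * C4 j' j l'))
          + ∑ l ∈ (Finset.univ.filter (· ≠ j)).erase j',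
              (c j l * c j' l * ((ns j:ℝ) * (ns j':ℝ) * C5 j j' l)
                + c j l * c j' j * ((ns j:ℝ) * (ns j':ℝ) * C4 j j' l)) := by
      intro j j' hj'
      have hj'j : j' ≠ j := (Finset.mem_filter.mp hj').2
      have hjj' : j ≠ j' := hj'j.symm
      -- pointwise values of the covariances
      have hoff : ∀ l ∈ Finset.univ.filter (· ≠ j), ∀ l' ∈ Finset.univ.filter (· ≠ j'),
          (∑ i ∈ S j, ∑ i' ∈ S j', c j l * c j' l' * cov P (ℓ i l) (ℓ i' l'))
          = c j l * c j' l' * ((ns j:ℝ) * (ns j':ℝ) *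
              (if l' = l then C5 j j' l
               else if l' = j then (if l = j' then 0 else C4 j j' l)
               else if l = j' then C4 j' j l' else 0)) := by
        intro l hl l' hl'
        have hlj : l ≠ j := (Finset.mem_filter.mp hl).2
        have hl'j' : l' ≠ j' := (Finset.mem_filter.mp hl').2
        by_cases h1 : l' = l
        · subst h1
          rw [if_pos rfl]
          exact hconstsum j j' l' l' (C5 j j' l')
            (fun i hi i' hi' => hC5 j j' l' hjj' hlj hl'j' i hi i' hi')
        · rw [if_neg h1]
          by_cases h2 : l' = j
          · rw [if_pos h2]
            by_cases h3 : l = j'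
            · rw [if_pos h3]
              exact hconstsum j j' l l' 0
                (fun i hi i' hi' => by
                  rw [h3, h2]; exact hzero' j j' hjj' i hi i' hi')
            · rw [if_neg h3]
              exact hconstsum j j' l l' (C4 j j' l)
                (fun i hi i' hi' => by
                  rw [h2]; exact hC4 j j' l hjj' hlj h3 i hi i' hi')
          · rw [if_neg h2]
            by_cases h3 : l = j'
            · rw [if_pos h3]
              exact hconstsum j j' l l' (C4 j' j l')
                (fun i hi i' hi' => by
                  rw [h3, cov_comm]
                  exact hC4 j' j l' hj'j hl'j' h2 i' hi' i hi)
            · rw [if_neg h3]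
              exact hconstsum j j' l l' 0
                (fun i hi i' hi' => hzero j j' l l' hlj hl'j'
                  (fun he => h1 he.symm) h2 h3 i hi i' hi'
                  (hdisj j j' hjj' i hi i' hi'))
      rw [Finset.sum_congr rfl (fun l hl => Finset.sum_congr rfl
        (fun l' hl' => hoff l hl l' hl'))]
      -- split the sum over l at l = j'
      have hj'F : j' ∈ Finset.univ.filter (· ≠ j) :=
        Finset.mem_filter.mpr ⟨Finset.mem_univ _, hj'j⟩
      rw [← Finset.add_sum_erase _ _ hj'F]
      congr 1
      -- the l = j' column
      · have hjF : j ∈ Finset.univ.filter (· ≠ j') :=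
          Finset.mem_filter.mpr ⟨Finset.mem_univ _, hjj'⟩
        rw [← Finset.add_sum_erase _ _ hjF]
        have hterm0 : c j j' * c j' j * ((ns j:ℝ) * (ns j':ℝ) *
            (if j = j' then C5 j j' j'
             else if j = j then (if j' = j' then 0 else C4 j j' j')
             else if j' = j' then C4 j' j j else 0)) = 0 := by
          rw [if_neg hjj', if_pos rfl, if_pos rfl, mul_zero, mul_zero]
        rw [hterm0, zero_add]
        refine Finset.sum_congr rfl fun l' hl' => ?_
        have hl'j : l' ≠ j := Finset.ne_of_mem_erase hl'
        have hl'j' : l' ≠ j' := (Finset.mem_filter.mp (Finset.mem_of_mem_erase hl')).2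
        rw [if_neg hl'j', if_neg hl'j, if_pos rfl]
      -- the l ≠ j' columns
      · refine Finset.sum_congr rfl fun l hl => ?_
        have hlj' : l ≠ j' := Finset.ne_of_mem_erase hl
        have hlj : l ≠ j := (Finset.mem_filter.mp (Finset.mem_of_mem_erase hl)).2
        have hlF : l ∈ Finset.univ.filter (· ≠ j') :=
          Finset.mem_filter.mpr ⟨Finset.mem_univ _, hlj'⟩
        rw [← Finset.add_sum_erase _ _ hlF, if_pos rfl]
        congr 1
        have hjF : j ∈ (Finset.univ.filter (· ≠ j')).erase l :=
          Finset.mem_erase.mpr ⟨hlj.symm, Finset.mem_filter.mpr ⟨Finset.mem_univ _, hjj'⟩⟩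
        rw [← Finset.add_sum_erase _ _ hjF]
        have hterm : c j l * c j' j * ((ns j:ℝ) * (ns j':ℝ) *
            (if j = l then C5 j j' l
             else if j = j then (if l = j' then 0 else C4 j j' l)
             else if l = j' then C4 j' j j else 0))
            = c j l * c j' j * ((ns j:ℝ) * (ns j':ℝ) * C4 j j' l) := by
          rw [if_neg (Ne.symm hlj), if_pos rfl, if_neg hlj']
        rw [hterm]
        have hrest : ∑ l' ∈ ((Finset.univ.filter (· ≠ j')).erase l).erase j,
            c j l * c j' l' * ((ns j:ℝ) * (ns j':ℝ) *
              (if l' = l then C5 j j' l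
               else if l' = j then (if l = j' then 0 else C4 j j' l)
               else if l = j' then C4 j' j l' else 0)) = 0 := by
          refine Finset.sum_eq_zero fun l' hl' => ?_
          have h1 : l' ≠ j := Finset.ne_of_mem_erase hl'
          have h2 : l' ≠ l := Finset.ne_of_mem_erase (Finset.mem_of_mem_erase hl')
          rw [if_neg h2, if_neg h1, if_neg hlj', mul_zero, mul_zero]
        rw [hrest, add_zero]
    rw [Finset.sum_congr rfl (fun j _ => Finset.sum_congr rfl (fun j' hj' => hLoff j j' hj'))]
    -- separate the two pieces and swap the first one
    rw [Finset.sum_congr rfl (fun j _ => Finset.sum_add_distrib), Finset.sum_add_distrib]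
    rw [sum_swap_ne (fun j j' => ∑ l' ∈ (Finset.univ.filter (· ≠ j')).erase j,
        c j j' * c j' l' * ((ns j:ℝ) * (ns j':ℝ) * C4 j' j l'))]
    rw [← Finset.sum_add_distrib]
    rw [Finset.sum_congr rfl (fun j _ => (Finset.sum_add_distrib).symm)]
    -- now compare per (j, j')
    refine (Finset.sum_congr rfl fun j _ => Finset.sum_congr rfl fun j' hj' => ?_).symm
    have hj'j : j' ≠ j := (Finset.mem_filter.mp hj').2
    have hjj' : j ≠ j' := hj'j.symm
    have hfe2 : Finset.univ.filter (fun l0 => l0 ≠ j ∧ l0 ≠ j')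
        = (Finset.univ.filter (· ≠ j)).erase j' := by
      ext x
      simp only [Finset.mem_erase, Finset.mem_filter, Finset.mem_univ, true_and]
      exact and_comm
    rw [hfe2, Finset.mul_sum, ← Finset.sum_add_distrib]
    refine Finset.sum_congr rfl fun l hl => ?_
    have hn0 : (n:ℝ) ≠ 0 := (hnR j).ne'
    have hd0 : ((n:ℝ) - ns j) ≠ 0 := (hdR j).ne'
    have hd0' : ((n:ℝ) - ns j') ≠ 0 := (hdR j').ne'
    simp only [hcdef]
    rw [hodns j, hodns j', hp j, hp l]
    field_simp
    ring
end
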